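/- Let (X_t)_{t≥0} be simple random walk on the comb graph C₂ started at the origin o = (0,0), writing X_t = (X_t^{(1)}, X_t^{(2)}) for its coordinates. For C > 0 and n ≥ 1 let R_{C,n} = {(x,y) ∈ ℤ² : |x| ≤ C√n, |y| ≤ n} and let T_{R_{C,n}} be the first exit time of the walk from R_{C,n}. Then for every ε > 0 there exists C = C(ε) < ∞ such that for every integer n ≥ 1, P_o(X_{T_{R_{C,n}}}^{(2)} = 0) ≤ ε; that is, the probability that the walk exits the rectangle through a vertex on the x-axis (rather than through the top or bottom of a tooth) is at most ε. -/

import Mathlib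

open scoped Classical

noncomputable section

variable {V : Type*}
def combGraph : SimpleGraph (ℤ × ℤ) where
  Adj u v := (u.1 = v.1 ∧ |u.2 - v.2| = 1) ∨ (u.2 = 0 ∧ v.2 = 0 ∧ |u.1 - v.1| = 1)
  symm := by
    constructor
    rintro u v (⟨h1, h2⟩ | ⟨h1, h2, h3⟩)
    · exact Or.inl ⟨h1.symm, by rw [abs_sub_comm]; exact h2⟩
    · exact Or.inr ⟨h2, h1, by rw [abs_sub_comm]; exact h3⟩
  loopless := by
    constructor
    rintro u (⟨h1, h2⟩ | ⟨h1, h2, h3⟩)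
    · simp at h2
    · simp at h3

noncomputable instance combGraph.locallyFinite (u : ℤ × ℤ) :
    Fintype (combGraph.neighborSet u) :=
  Set.Finite.fintype <| by
    apply Set.Finite.subset
      ((((Set.finite_singleton ((u.1 - 1, 0) : ℤ × ℤ)).insert (u.1 + 1, 0)).insert
        (u.1, u.2 - 1)).insert (u.1, u.2 + 1))
    rintro ⟨a, b⟩ hv
    have hv' : (u.1 = a ∧ |u.2 - b| = 1) ∨ (u.2 = 0 ∧ b = 0 ∧ |u.1 - a| = 1) := hv
    simp only [Set.mem_insert_iff, Set.mem_singleton_iff, Prod.mk.injEq]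
    rcases hv' with ⟨h1, h2⟩ | ⟨h1, h2, h3⟩
    · rw [abs_eq (by norm_num : (0:ℤ) ≤ 1)] at h2
      omega
    · rw [abs_eq (by norm_num : (0:ℤ) ≤ 1)] at h3
      omega


/-- `killedKernel G A k x y` is the probability that simple random walk on `G` started at `x`
is at `y` at time `k` and has stayed inside `A` at all times `0, 1, …, k-1`. -/
def killedKernel (G : SimpleGraph V) [G.LocallyFinite] (A : Set V) : ℕ → V → V → ℝ
  | 0 => fun x y => if x = y then 1 else 0
  | (k + 1) => fun x y =>
      ∑ z ∈ G.neighborFinset y,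
        killedKernel G A k x z * (if z ∈ A then ((G.degree z : ℝ))⁻¹ else 0)

/-- The rectangle `R_{C,n} = [-C√n, C√n] × [-n, n]` in the comb graph. -/
def combRect (C : ℝ) (n : ℕ) : Set (ℤ × ℤ) :=
  {v | ((|v.1| : ℤ) : ℝ) ≤ C * Real.sqrt n ∧ |v.2| ≤ (n : ℤ)}

/-- The probability that simple random walk on the comb graph started at the origin exits the
rectangle `R_{C,n}` through a vertex on the x-axis: the walk stays in the rectangle up to some
time `k` and at time `k+...` first leaves it at a vertex whose second coordinate is `0`. -/
def exitAxisProb (C : ℝ) (n : ℕ) : ℝ :=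
  ∑' k : ℕ, ∑' v : ℤ × ℤ,
    if v ∉ combRect C n ∧ v.2 = 0 then killedKernel combGraph (combRect C n) k (0, 0) v else 0
namespace CombExitAux

open Real Finset

lemma comb_adj_iff (u v : ℤ × ℤ) : combGraph.Adj u v ↔
    ((u.1 = v.1 ∧ (u.2 - v.2 = 1 ∨ u.2 - v.2 = -1)) ∨
     (u.2 = 0 ∧ v.2 = 0 ∧ (u.1 - v.1 = 1 ∨ u.1 - v.1 = -1))) := by
  show ((u.1 = v.1 ∧ |u.2 - v.2| = 1) ∨ (u.2 = 0 ∧ v.2 = 0 ∧ |u.1 - v.1| = 1)) ↔ _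
  rw [abs_eq (by norm_num : (0:ℤ) ≤ 1), abs_eq (by norm_num : (0:ℤ) ≤ 1)]

lemma nf_tooth (x y : ℤ) (hy : y ≠ 0) :
    combGraph.neighborFinset (x, y) = {(x, y+1), (x, y-1)} := by
  ext ⟨a, b⟩
  rw [SimpleGraph.mem_neighborFinset, comb_adj_iff]
  constructor
  · rintro (⟨h1, h2⟩ | ⟨h1, h2, h3⟩) <;>
      simp only [Finset.mem_insert, Finset.mem_singleton, Prod.mk.injEq] <;> omega
  · intro h
    simp only [Finset.mem_insert, Finset.mem_singleton, Prod.mk.injEq] at h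
    dsimp only
    omega

lemma nf_axis (x : ℤ) :
    combGraph.neighborFinset (x, (0:ℤ)) = {(x+1, 0), (x-1, 0), (x, 1), (x, -1)} := by
  ext ⟨a, b⟩
  rw [SimpleGraph.mem_neighborFinset, comb_adj_iff]
  constructor
  · rintro (⟨h1, h2⟩ | ⟨h1, h2, h3⟩) <;>
      simp only [Finset.mem_insert, Finset.mem_singleton, Prod.mk.injEq] <;> omega
  · intro h
    simp only [Finset.mem_insert, Finset.mem_singleton, Prod.mk.injEq] at h
    dsimp only
    omega

lemma degree_tooth (x y : ℤ) (hy : y ≠ 0) : combGraph.degree (x, y) = 2 := by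
  rw [SimpleGraph.degree, nf_tooth x y hy]
  rw [Finset.card_insert_of_notMem (by simp only [Finset.mem_singleton, Prod.mk.injEq]; omega),
    Finset.card_singleton]

lemma degree_axis (x : ℤ) : combGraph.degree (x, (0:ℤ)) = 4 := by
  rw [SimpleGraph.degree, nf_axis x]
  rw [Finset.card_insert_of_notMem (by
      simp only [Finset.mem_insert, Finset.mem_singleton, Prod.mk.injEq]; omega),
    Finset.card_insert_of_notMem (by
      simp only [Finset.mem_insert, Finset.mem_singleton, Prod.mk.injEq]; omega),
    Finset.card_insert_of_notMem (by
      simp only [Finset.mem_singleton, Prod.mk.injEq]; omega),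
    Finset.card_singleton]

lemma degree_pos (v : ℤ × ℤ) : 0 < (combGraph.degree v : ℝ) := by
  obtain ⟨x, y⟩ := v
  by_cases hy : y = 0
  · subst hy; rw [degree_axis]; norm_num
  · rw [degree_tooth x y hy]; norm_num

/-! ### Killed kernel basics -/

lemma killed_nonneg {V : Type*} (G : SimpleGraph V) [G.LocallyFinite] (A : Set V)
    (k : ℕ) (x : V) : ∀ y, 0 ≤ killedKernel G A k x y := by
  induction k with
  | zero => intro y; simp only [killedKernel]; split <;> norm_num
  | succ k ih =>
    intro y
    simp only [killedKernel]
    refine Finset.sum_nonneg fun z _ => mul_nonneg (ih z) ?_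
    split
    · positivity
    · exact le_refl 0

def box (k : ℕ) : Finset (ℤ × ℤ) := Finset.Icc (-(k:ℤ)) k ×ˢ Finset.Icc (-(k:ℤ)) k

lemma mem_box {k : ℕ} {v : ℤ × ℤ} :
    v ∈ box k ↔ (-(k:ℤ) ≤ v.1 ∧ v.1 ≤ k) ∧ (-(k:ℤ) ≤ v.2 ∧ v.2 ≤ k) := by
  simp [box, Finset.mem_product, Finset.mem_Icc]

lemma adj_box {k : ℕ} {v z : ℤ × ℤ} (hz : z ∈ box k) (h : combGraph.Adj v z) :
    v ∈ box (k+1) := by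
  rw [comb_adj_iff] at h
  rw [mem_box] at hz ⊢
  push_cast
  omega

lemma nbr_box {k : ℕ} {z : ℤ × ℤ} (hz : z ∈ box k) :
    combGraph.neighborFinset z ⊆ box (k+1) := by
  intro v hv
  rw [SimpleGraph.mem_neighborFinset] at hv
  exact adj_box hz hv.symm

lemma killed_support (A : Set (ℤ × ℤ)) (k : ℕ) :
    ∀ v ∉ box k, killedKernel combGraph A k ((0:ℤ), (0:ℤ)) v = 0 := by
  induction k with
  | zero =>
    intro v hv
    have hne : ((0:ℤ), (0:ℤ)) ≠ v := by
      rintro rfl; exact hv (by rw [mem_box]; norm_num)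
    simp only [killedKernel]
    rw [if_neg hne]
  | succ k ih =>
    intro v hv
    simp only [killedKernel]
    apply Finset.sum_eq_zero
    intro z hz
    rw [SimpleGraph.mem_neighborFinset] at hz
    by_cases hzb : z ∈ box k
    · exact absurd (adj_box hzb hz) hv
    · rw [ih z hzb, zero_mul]

/-! ### The weight function -/

def tW (n : ℕ) (y : ℤ) : ℝ := max 0 (1 - ((|y| : ℤ) : ℝ) / ((n : ℝ) + 1))

def fW (C : ℝ) (n : ℕ) (v : ℤ × ℤ) : ℝ :=
  Real.cosh ((v.1 : ℝ) / (2 * Real.sqrt n)) / Real.cosh (C / 2) * tW n v.2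

lemma fW_mk (C : ℝ) (n : ℕ) (x y : ℤ) :
    fW C n (x, y) = Real.cosh ((x : ℝ) / (2 * Real.sqrt n)) / Real.cosh (C / 2) * tW n y := rfl

lemma tW_nonneg (n : ℕ) (y : ℤ) : 0 ≤ tW n y := le_max_left _ _

lemma fW_nonneg (C : ℝ) (n : ℕ) (v : ℤ × ℤ) : 0 ≤ fW C n v :=
  mul_nonneg (div_nonneg (Real.cosh_pos _).le (Real.cosh_pos _).le) (tW_nonneg n v.2)

lemma tW_eq (n : ℕ) (y : ℤ) (h : |y| ≤ (n:ℤ) + 1) :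
    tW n y = 1 - ((|y| : ℤ) : ℝ) / ((n : ℝ) + 1) := by
  apply max_eq_right
  rw [sub_nonneg]
  apply div_le_one_of_le₀
  · exact_mod_cast h
  · positivity

lemma tW_zero (n : ℕ) : tW n 0 = 1 := by
  simp [tW]

lemma fW_o (C : ℝ) (n : ℕ) : fW C n ((0:ℤ), (0:ℤ)) = 1 / Real.cosh (C/2) := by
  rw [fW_mk, tW_zero]
  norm_num

lemma cosh_small_bound (n : ℕ) (hn : 1 ≤ n) :
    Real.cosh (1 / (2 * Real.sqrt n)) ≤ 1 + 1 / ((n : ℝ) + 1) := by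
  have hn' : (1:ℝ) ≤ (n:ℝ) := by exact_mod_cast hn
  have hs : Real.sqrt (n:ℝ) ^ 2 = (n:ℝ) := Real.sq_sqrt (by positivity)
  have hs0 : (0:ℝ) < Real.sqrt (n:ℝ) := Real.sqrt_pos.mpr (by linarith)
  have h1 : (1 / (2 * Real.sqrt (n:ℝ))) ^ 2 / 2 = 1 / (8 * (n:ℝ)) := by
    rw [div_pow, one_pow, mul_pow, hs]; ring
  have h2 := Real.cosh_le_exp_half_sq (1 / (2 * Real.sqrt (n:ℝ)))
  rw [h1] at h2
  have hpos : (0:ℝ) < 1 - 1/(8*(n:ℝ)) := by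
    have h8 : (8:ℝ) ≤ 8*(n:ℝ) := by linarith
    have := one_div_le_one_div_of_le (by norm_num : (0:ℝ) < 8) h8
    linarith
  have h3 : Real.exp (1/(8*(n:ℝ))) ≤ 1 / (1 - 1/(8*(n:ℝ))) := by
    have ht : 1 - 1/(8*(n:ℝ)) ≤ Real.exp (-(1/(8*(n:ℝ)))) := by
      have := Real.add_one_le_exp (-(1/(8*(n:ℝ))))
      linarith
    calc Real.exp (1/(8*(n:ℝ))) = 1 / Real.exp (-(1/(8*(n:ℝ)))) := by
          rw [Real.exp_neg]; field_simp
      _ ≤ 1 / (1 - 1/(8*(n:ℝ))) := one_div_le_one_div_of_le hpos ht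
  have h4 : 1 / (1 - 1/(8*(n:ℝ))) ≤ 1 + 1/((n:ℝ)+1) := by
    rw [div_le_iff₀ hpos]
    have hA : (0:ℝ) < (n:ℝ)+1 := by linarith
    have hB : (0:ℝ) < 8*(n:ℝ) := by linarith
    field_simp
    nlinarith
  linarith

lemma one_le_fW (C : ℝ) (hC : 0 < C) (n : ℕ) (hn : 1 ≤ n) (v : ℤ × ℤ)
    (h2 : v.2 = 0) (hv : v ∉ combRect C n) : 1 ≤ fW C n v := by
  obtain ⟨x, y⟩ := v
  simp only at h2
  subst h2
  have hn' : (1:ℝ) ≤ (n:ℝ) := by exact_mod_cast hn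
  have hs0 : (0:ℝ) < Real.sqrt (n:ℝ) := Real.sqrt_pos.mpr (by linarith)
  have hx : C * Real.sqrt n ≤ ((|x| : ℤ) : ℝ) := by
    by_contra hle
    push_neg at hle
    exact hv ⟨hle.le, by simp⟩
  rw [fW_mk, tW_zero, mul_one, le_div_iff₀ (Real.cosh_pos _), one_mul]
  have habs : |(x:ℝ) / (2 * Real.sqrt n)| = ((|x| : ℤ) : ℝ) / (2 * Real.sqrt n) := by
    rw [abs_div, abs_of_pos (by positivity : (0:ℝ) < 2 * Real.sqrt n)]
    norm_cast
  apply Real.cosh_le_cosh.mpr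
  rw [habs, abs_of_pos (by linarith : (0:ℝ) < C/2)]
  rw [div_le_div_iff₀ (by norm_num) (by positivity)]
  calc C * (2 * Real.sqrt n) = (C * Real.sqrt n) * 2 := by ring
    _ ≤ ((|x| : ℤ) : ℝ) * 2 := by linarith

lemma sum_nbr_le (C : ℝ) (n : ℕ) (hn : 1 ≤ n) (v : ℤ × ℤ) (hv2 : |v.2| ≤ (n:ℤ)) :
    ∑ w ∈ combGraph.neighborFinset v, fW C n w ≤ (combGraph.degree v : ℝ) * fW C n v := by
  obtain ⟨x, y⟩ := v
  simp only at hv2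
  have hn' : (1:ℝ) ≤ (n:ℝ) := by exact_mod_cast hn
  have hs0 : (0:ℝ) < Real.sqrt (n:ℝ) := Real.sqrt_pos.mpr (by linarith)
  have hD : (0:ℝ) < Real.cosh (C/2) := Real.cosh_pos _
  by_cases hy : y = 0
  · subst hy
    rw [nf_axis, degree_axis]
    rw [Finset.sum_insert (by
        simp only [Finset.mem_insert, Finset.mem_singleton, Prod.mk.injEq]; omega),
      Finset.sum_insert (by
        simp only [Finset.mem_insert, Finset.mem_singleton, Prod.mk.injEq]; omega),
      Finset.sum_insert (by
        simp only [Finset.mem_singleton, Prod.mk.injEq]; omega),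
      Finset.sum_singleton]
    have h1 : tW n (0:ℤ) = 1 := tW_zero n
    have h2 : tW n 1 = 1 - 1/((n:ℝ)+1) := by
      rw [tW_eq n 1 (by rw [abs_one]; omega)]; norm_num
    have h3 : tW n (-1) = 1 - 1/((n:ℝ)+1) := by
      rw [tW_eq n (-1) (by rw [abs_neg, abs_one]; omega)]; norm_num
    rw [fW_mk, fW_mk, fW_mk, fW_mk, fW_mk, h1, h2, h3]
    push_cast
    set s : ℝ := 2 * Real.sqrt (n:ℝ) with hs
    have hspos : (0:ℝ) < s := by positivity
    have hadd : Real.cosh (((x:ℝ)+1)/s) + Real.cosh (((x:ℝ)-1)/s)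
        = 2 * Real.cosh ((x:ℝ)/s) * Real.cosh (1/s) := by
      have e1 : ((x:ℝ)+1)/s = (x:ℝ)/s + 1/s := by ring
      have e2 : ((x:ℝ)-1)/s = (x:ℝ)/s - 1/s := by ring
      rw [e1, e2, Real.cosh_add, Real.cosh_sub]; ring
    have hca : Real.cosh (1/s) ≤ 1 + 1/((n:ℝ)+1) := by
      have := cosh_small_bound n hn
      simpa [hs] using this
    have hcx : (0:ℝ) < Real.cosh ((x:ℝ)/s) := Real.cosh_pos _
    have key : Real.cosh (((x:ℝ)+1)/s) + (Real.cosh (((x:ℝ)-1)/s)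
        + (Real.cosh ((x:ℝ)/s) * (1 - 1/((n:ℝ)+1)) + Real.cosh ((x:ℝ)/s) * (1 - 1/((n:ℝ)+1))))
        ≤ 4 * Real.cosh ((x:ℝ)/s) := by
      nlinarith [mul_le_mul_of_nonneg_left hca hcx.le]
    calc Real.cosh (((x:ℝ)+1)/s) / Real.cosh (C/2) * 1
          + (Real.cosh (((x:ℝ)-1)/s) / Real.cosh (C/2) * 1
          + (Real.cosh ((x:ℝ)/s) / Real.cosh (C/2) * (1 - 1/((n:ℝ)+1))
          + Real.cosh ((x:ℝ)/s) / Real.cosh (C/2) * (1 - 1/((n:ℝ)+1))))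
        = (Real.cosh (((x:ℝ)+1)/s) + (Real.cosh (((x:ℝ)-1)/s)
          + (Real.cosh ((x:ℝ)/s) * (1 - 1/((n:ℝ)+1))
          + Real.cosh ((x:ℝ)/s) * (1 - 1/((n:ℝ)+1))))) / Real.cosh (C/2) := by ring
      _ ≤ (4 * Real.cosh ((x:ℝ)/s)) / Real.cosh (C/2) := by gcongr
      _ = 4 * (Real.cosh ((x:ℝ)/s) / Real.cosh (C/2) * 1) := by ring
  · rw [nf_tooth x y hy, degree_tooth x y hy]
    rw [Finset.sum_insert (by simp only [Finset.mem_singleton, Prod.mk.injEq]; omega),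
      Finset.sum_singleton]
    apply le_of_eq
    rw [fW_mk, fW_mk, fW_mk]
    have habs : ((|y+1| : ℤ) : ℝ) + ((|y-1| : ℤ) : ℝ) = 2 * ((|y| : ℤ) : ℝ) := by
      have h : |y+1| + |y-1| = 2 * |y| := by
        rcases lt_or_gt_of_ne hy with h | h
        · rw [abs_of_nonpos (by omega : y+1 ≤ 0), abs_of_nonpos (by omega : y-1 ≤ 0),
            abs_of_nonpos (by omega : y ≤ 0)]
          ring
        · rw [abs_of_nonneg (by omega : 0 ≤ y+1), abs_of_nonneg (by omega : 0 ≤ y-1),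
            abs_of_nonneg (by omega : 0 ≤ y)]
          ring
      exact_mod_cast h
    have hy' := abs_le.mp hv2
    have ht : tW n (y+1) + tW n (y-1) = 2 * tW n y := by
      rw [tW_eq n (y+1) (abs_le.mpr ⟨by omega, by omega⟩),
        tW_eq n (y-1) (abs_le.mpr ⟨by omega, by omega⟩),
        tW_eq n y (abs_le.mpr ⟨by omega, by omega⟩)]
      push_cast at habs ⊢
      field_simp
      linarith [habs]
    calc Real.cosh ((x:ℝ)/(2*Real.sqrt n)) / Real.cosh (C/2) * tW n (y+1)
          + Real.cosh ((x:ℝ)/(2*Real.sqrt n)) / Real.cosh (C/2) * tW n (y-1)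
        = Real.cosh ((x:ℝ)/(2*Real.sqrt n)) / Real.cosh (C/2) * (tW n (y+1) + tW n (y-1)) := by
          ring
      _ = Real.cosh ((x:ℝ)/(2*Real.sqrt n)) / Real.cosh (C/2) * (2 * tW n y) := by rw [ht]
      _ = 2 * (Real.cosh ((x:ℝ)/(2*Real.sqrt n)) / Real.cosh (C/2) * tW n y) := by ring

/-! ### The supermartingale argument -/

def KK (C : ℝ) (n : ℕ) (k : ℕ) (v : ℤ × ℤ) : ℝ :=
  killedKernel combGraph (combRect C n) k ((0:ℤ), (0:ℤ)) v

def SS (C : ℝ) (n : ℕ) (k : ℕ) : ℝ := ∑ v ∈ box k, KK C n k v * fW C n v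

def EE (C : ℝ) (n : ℕ) (k : ℕ) : ℝ :=
  ∑ v ∈ box k, if v ∉ combRect C n ∧ v.2 = 0 then KK C n k v else 0

lemma KK_nonneg (C : ℝ) (n : ℕ) (k : ℕ) (v : ℤ × ℤ) : 0 ≤ KK C n k v :=
  killed_nonneg _ _ k _ v

lemma SS_nonneg (C : ℝ) (n : ℕ) (k : ℕ) : 0 ≤ SS C n k :=
  Finset.sum_nonneg fun v _ => mul_nonneg (KK_nonneg C n k v) (fW_nonneg C n v)

lemma EE_nonneg (C : ℝ) (n : ℕ) (k : ℕ) : 0 ≤ EE C n k := by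
  refine Finset.sum_nonneg fun v _ => ?_
  split
  · exact KK_nonneg C n k v
  · exact le_refl 0

lemma SS_zero (C : ℝ) (n : ℕ) : SS C n 0 = 1 / Real.cosh (C/2) := by
  have hbox : box 0 = {((0:ℤ), (0:ℤ))} := by
    ext ⟨a, b⟩
    rw [mem_box]
    simp only [Finset.mem_singleton, Prod.mk.injEq]
    omega
  rw [SS, hbox, Finset.sum_singleton]
  have hK : KK C n 0 ((0:ℤ), (0:ℤ)) = 1 := by
    simp [KK, killedKernel]
  rw [hK, one_mul, fW_o]

lemma step_ineq (C : ℝ) (hC : 0 < C) (n : ℕ) (hn : 1 ≤ n) (k : ℕ) :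
    SS C n (k+1) + EE C n k ≤ SS C n k := by
  set A := combRect C n with hA
  set g : ℤ × ℤ → ℝ := fun z =>
    KK C n k z * (if z ∈ A then ((combGraph.degree z : ℝ))⁻¹ else 0) with hg
  have hg0 : ∀ z ∉ box k, g z = 0 := fun z hz => by
    rw [hg]
    simp only
    rw [show KK C n k z = 0 from killed_support A k z hz, zero_mul]
  have hrec : ∀ v, KK C n (k+1) v = ∑ z ∈ combGraph.neighborFinset v, g z := fun v => rfl
  -- rewrite KK (k+1) as a sum over box k
  have hrec2 : ∀ v, KK C n (k+1) v = ∑ z ∈ box k, if combGraph.Adj v z then g z else 0 := by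
    intro v
    rw [hrec]
    rw [← Finset.sum_subset (Finset.inter_subset_left :
        combGraph.neighborFinset v ∩ box k ⊆ combGraph.neighborFinset v)
      (fun z hz hnz => hg0 z (fun hb => hnz (Finset.mem_inter.mpr ⟨hz, hb⟩)))]
    rw [Finset.inter_comm, ← Finset.sum_ite_mem]
    apply Finset.sum_congr rfl
    intro z _
    exact if_congr (SimpleGraph.mem_neighborFinset _ _ _) rfl rfl
  have e1 : SS C n (k+1) = ∑ z ∈ box k, g z * ∑ v ∈ combGraph.neighborFinset z, fW C n v := by
    rw [SS]
    calc ∑ v ∈ box (k+1), KK C n (k+1) v * fW C n v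
        = ∑ v ∈ box (k+1), ∑ z ∈ box k, (if combGraph.Adj v z then g z else 0) * fW C n v := by
          apply Finset.sum_congr rfl
          intro v _
          rw [hrec2 v, Finset.sum_mul]
      _ = ∑ z ∈ box k, ∑ v ∈ box (k+1), (if combGraph.Adj v z then g z else 0) * fW C n v :=
          Finset.sum_comm
      _ = ∑ z ∈ box k, g z * ∑ v ∈ box (k+1), (if combGraph.Adj v z then fW C n v else 0) := by
          apply Finset.sum_congr rfl
          intro z _
          rw [Finset.mul_sum]
          apply Finset.sum_congr rfl
          intro v _
          rw [ite_mul, zero_mul, mul_ite, mul_zero]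
      _ = ∑ z ∈ box k, g z * ∑ v ∈ combGraph.neighborFinset z, fW C n v := by
          apply Finset.sum_congr rfl
          intro z hz
          congr 1
          calc ∑ v ∈ box (k+1), (if combGraph.Adj v z then fW C n v else 0)
              = ∑ v ∈ box (k+1), (if v ∈ combGraph.neighborFinset z then fW C n v else 0) := by
                apply Finset.sum_congr rfl
                intro v _
                refine if_congr ?_ rfl rfl
                rw [SimpleGraph.mem_neighborFinset]
                exact combGraph.adj_comm v z
            _ = ∑ v ∈ box (k+1) ∩ combGraph.neighborFinset z, fW C n v :=
                Finset.sum_ite_mem _ _ _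
            _ = ∑ v ∈ combGraph.neighborFinset z, fW C n v := by
                rw [Finset.inter_eq_right.mpr (nbr_box hz)]
  have pointwise : ∀ z ∈ box k,
      g z * ∑ v ∈ combGraph.neighborFinset z, fW C n v
        ≤ KK C n k z * fW C n z - (if z ∉ A ∧ z.2 = 0 then KK C n k z else 0) := by
    intro z hz
    by_cases hzA : z ∈ A
    · rw [hg]
      simp only
      rw [if_pos hzA, if_neg (by tauto)]
      rw [sub_zero, mul_assoc]
      apply mul_le_mul_of_nonneg_left _ (KK_nonneg C n k z)
      rw [inv_mul_le_iff₀ (degree_pos z)]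
      exact (sum_nbr_le C n hn z hzA.2).trans_eq rfl
    · rw [hg]
      simp only
      rw [if_neg hzA, mul_zero, zero_mul]
      by_cases h2 : z.2 = 0
      · rw [if_pos ⟨hzA, h2⟩]
        have h1 : 1 ≤ fW C n z := one_le_fW C hC n hn z h2 hzA
        have := mul_le_mul_of_nonneg_left h1 (KK_nonneg C n k z)
        linarith
      · rw [if_neg (by tauto)]
        have := mul_nonneg (KK_nonneg C n k z) (fW_nonneg C n z)
        linarith
  have e2 : SS C n (k+1) ≤ SS C n k - EE C n k := by
    rw [e1, SS, EE, ← Finset.sum_sub_distrib]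
    exact Finset.sum_le_sum pointwise
  linarith

lemma telescope (C : ℝ) (hC : 0 < C) (n : ℕ) (hn : 1 ≤ n) (K' : ℕ) :
    (∑ k ∈ Finset.range K', EE C n k) + SS C n K' ≤ SS C n 0 := by
  induction K' with
  | zero => simp
  | succ K' ih =>
    rw [Finset.sum_range_succ]
    have := step_ineq C hC n hn K'
    linarith

end CombExitAux
/-- **Exit through the teeth of the comb** (Florescu–Peres–Rácz, Lemma 5.1).
For every `ε > 0` there is `C = C(ε) < ∞` such that for every `n ≥ 1`, simple random walk on the
comb graph started at the origin exits the rectangle `R_{C,n} = [-C√n, C√n] × [-n, n]` through a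
vertex on the x-axis with probability at most `ε`. -/
theorem comb_exit_through_axis (ε : ℝ) (hε : 0 < ε) :
    ∃ C : ℝ, 0 < C ∧ ∀ n : ℕ, 1 ≤ n → exitAxisProb C n ≤ ε := by
  refine ⟨max 1 (2 * Real.log (2/ε) + 2), lt_of_lt_of_le one_pos (le_max_left _ _),
    fun n hn => ?_⟩
  set C := max 1 (2 * Real.log (2/ε) + 2) with hCdef
  have hC : 0 < C := lt_of_lt_of_le one_pos (le_max_left _ _)
  have hD : 0 < Real.cosh (C/2) := Real.cosh_pos _
  have hbound : exitAxisProb C n ≤ 1 / Real.cosh (C/2) := by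
    rw [exitAxisProb]
    have he : ∀ k : ℕ, (∑' v : ℤ × ℤ,
        if v ∉ combRect C n ∧ v.2 = 0 then
          killedKernel combGraph (combRect C n) k (0, 0) v else 0)
        = CombExitAux.EE C n k := by
      intro k
      apply tsum_eq_sum
      intro v hv
      rw [show killedKernel combGraph (combRect C n) k (0, 0) v = 0 from
        CombExitAux.killed_support (combRect C n) k v hv]
      exact ite_self 0
    rw [tsum_congr he]
    apply Real.tsum_le_of_sum_range_le (fun k => CombExitAux.EE_nonneg C n k)
    intro K'
    have h1 := CombExitAux.telescope C hC n hn K'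
    have h2 := CombExitAux.SS_nonneg C n K'
    rw [CombExitAux.SS_zero C n] at h1
    linarith
  have hlog : Real.log (2/ε) + 1 ≤ C/2 := by
    have h := le_max_right 1 (2 * Real.log (2/ε) + 2)
    rw [← hCdef] at h
    linarith
  have hexp : (2:ℝ)/ε ≤ Real.exp (C/2) := by
    rw [← Real.exp_log (by positivity : (0:ℝ) < 2/ε)]
    exact Real.exp_le_exp.mpr (by linarith)
  have hcosh : 1/ε ≤ Real.cosh (C/2) := by
    rw [Real.cosh_eq]
    have h0 := Real.exp_pos (-(C/2))
    have h1 : 2 * (1/ε) = 2/ε := by ring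
    linarith
  calc exitAxisProb C n ≤ 1 / Real.cosh (C/2) := hbound
    _ ≤ ε := by
      rw [div_le_iff₀ hD]
      have h := (div_le_iff₀ hε).mp hcosh
      nlinarith

end
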